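/- arXiv:1907.07678 — 5 statements merged into one kernel-verified Lean document; each statement's English description precedes it below -/
import Mathlib

section
/- Let Ω be a 2×2 matrix of meromorphic 1-forms of pole order n ≥ 2 at z=0 with non-scalar leading coefficient A₀. If A₀ has distinct eigenvalues then the discriminant Δ(Ω) = tr(Ω)² − 4det(Ω) (a meromorphic quadratic differential) has pole order exactly 2n at z=0; if A₀ is a nontrivial Jordan block with the (2,1)-entry c₁ of the subleading coefficient A₁ nonzero, then Δ(Ω) has pole order exactly 2n−1. -/
set_option maxHeartbeats 1000000

noncomputable section

/-- Truncation of a formal Laurent series: keep the coefficients of order `< k`. -/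
def truncLT (k : ℤ) (f : LaurentSeries ℂ) : LaurentSeries ℂ where
  coeff n := if n < k then f.coeff n else 0
  isPWO_support' := f.isPWO_support'.mono (by
    intro n hn
    simp only [Function.mem_support] at hn ⊢
    by_cases h : n < k
    · simpa [h] using hn
    · simp [h] at hn)

/-- The negative (principal) part of a formal Laurent series at `z = 0`. -/
def negPart (f : LaurentSeries ℂ) : LaurentSeries ℂ := truncLT 0 f

/-- Formal derivative `d/dz` of a formal Laurent series. -/
def lderiv (f : LaurentSeries ℂ) : LaurentSeries ℂ where
  coeff n := ((n + 1 : ℤ) : ℂ) * f.coeff (n + 1)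
  isPWO_support' := by
    have h : (Function.support fun n : ℤ => ((n + 1 : ℤ) : ℂ) * f.coeff (n + 1)) ⊆
        (fun n : ℤ => n - 1) '' (Function.support f.coeff) := by
      intro n hn
      simp only [Function.mem_support] at hn
      exact ⟨n + 1, fun h => hn (by rw [h, mul_zero]), by ring⟩
    exact (f.isPWO_support'.image_of_monotoneOn
      (fun a _ b _ hab => by omega)).mono h

/-- The gauge transformation `Ω ↦ M⁻¹ Ω M + M⁻¹ dM` (1-forms written `f dz`,
identified with their Laurent-series coefficient `f`). -/
def gaugeT (M Ω : Matrix (Fin 2) (Fin 2) (LaurentSeries ℂ)) :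
    Matrix (Fin 2) (Fin 2) (LaurentSeries ℂ) :=
  M⁻¹ * Ω * M + M⁻¹ * (M.map lderiv)

/-- `M` has formal power series entries, i.e. entries in `ℂ[[z]] ⊂ ℂ((z))`. -/
def MatHolo (M : Matrix (Fin 2) (Fin 2) (LaurentSeries ℂ)) : Prop :=
  ∀ i j, ∀ m : ℤ, m < 0 → (M i j).coeff m = 0

lemma coeff_mul_lt (f g : LaurentSeries ℂ) {a b : ℤ}
    (hf : ∀ m, m < a → f.coeff m = 0) (hg : ∀ m, m < b → g.coeff m = 0)
    {m : ℤ} (hm : m < a + b) : (f * g).coeff m = 0 := by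
  rw [HahnSeries.coeff_mul]
  apply Finset.sum_eq_zero
  intro ij hij
  rw [Finset.mem_addAntidiagonal] at hij
  obtain ⟨h1, h2, h3⟩ := hij
  rw [HahnSeries.mem_support] at h1 h2
  exfalso
  have ha : a ≤ ij.1 := not_lt.1 fun h => h1 (hf _ h)
  have hb : b ≤ ij.2 := not_lt.1 fun h => h2 (hg _ h)
  omega

lemma coeff_mul_bot (f g : LaurentSeries ℂ) {a b : ℤ}
    (hf : ∀ m, m < a → f.coeff m = 0) (hg : ∀ m, m < b → g.coeff m = 0) :
    (f * g).coeff (a + b) = f.coeff a * g.coeff b := by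
  rw [HahnSeries.coeff_mul]
  rw [Finset.sum_eq_single (a, b)]
  · intro ij hij hne
    rw [Finset.mem_addAntidiagonal] at hij
    obtain ⟨h1, h2, h3⟩ := hij
    rw [HahnSeries.mem_support] at h1 h2
    have ha : a ≤ ij.1 := not_lt.1 fun h => h1 (hf _ h)
    have hb : b ≤ ij.2 := not_lt.1 fun h => h2 (hg _ h)
    exact absurd (Prod.ext (by omega) (by omega)) hne
  · intro h
    rw [Finset.mem_addAntidiagonal] at h
    simp only [HahnSeries.mem_support, not_and, not_not] at h
    by_cases h1 : f.coeff a = 0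
    · rw [h1, zero_mul]
    by_cases h2 : g.coeff b = 0
    · rw [h2, mul_zero]
    exact absurd trivial (h h1 h2)

lemma coeff_mul_succ (f g : LaurentSeries ℂ) {a b : ℤ}
    (hf : ∀ m, m < a → f.coeff m = 0) (hg : ∀ m, m < b → g.coeff m = 0) :
    (f * g).coeff (a + b + 1) =
      f.coeff a * g.coeff (b + 1) + f.coeff (a + 1) * g.coeff b := by
  set c := f.coeff a with hc
  set f₁ := f - HahnSeries.single a c with hf₁def
  have hf₁ : ∀ m, m < a + 1 → f₁.coeff m = 0 := by
    intro m hm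
    rw [hf₁def, HahnSeries.coeff_sub, HahnSeries.coeff_single]
    by_cases h : m = a
    · simp [h, hc]
    · have : m < a := by omega
      simp [h, hf _ this]
  have hfe : f = HahnSeries.single a c + f₁ := by rw [hf₁def]; ring
  have h1 : (HahnSeries.single a c * g).coeff (a + b + 1) = c * g.coeff (b + 1) := by
    have := HahnSeries.coeff_single_mul_add (r := c) (x := g) (a := b + 1) (b := a)
    rw [show b + 1 + a = a + b + 1 by ring] at this
    exact this
  have h2 : (f₁ * g).coeff (a + b + 1) = f.coeff (a + 1) * g.coeff b := by
    have := coeff_mul_bot f₁ g hf₁ hg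
    rw [show a + 1 + b = a + b + 1 by ring] at this
    rw [this, hf₁def, HahnSeries.coeff_sub, HahnSeries.coeff_single_of_ne (by omega : a + 1 ≠ a)]
    ring
  conv_lhs => rw [hfe, add_mul, HahnSeries.coeff_add, h1, h2]

lemma four_eq : (4 : LaurentSeries ℂ) = HahnSeries.single (0:ℤ) (4:ℂ) := by
  rw [← map_ofNat (HahnSeries.C : ℂ →+* LaurentSeries ℂ) 4, HahnSeries.C_apply]

/-- for a reduced pole of order `n ≥ 2`, the discriminant
`Δ(Ω) = tr(Ω)² − 4 det(Ω)` has pole order exactly `2n` in the unramified case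
(`A₀` with distinct eigenvalues) and exactly `2n − 1` in the ramified case
(`A₀` a nontrivial Jordan block and `c₁ ≠ 0`). -/
theorem discriminant_pole_order
    (n : ℕ) (hn : 2 ≤ n) (Ω : Matrix (Fin 2) (Fin 2) (LaurentSeries ℂ))
    (hpole : ∀ i j, ∀ m : ℤ, m < -(n : ℤ) → (Ω i j).coeff m = 0)
    (A₀ : Matrix (Fin 2) (Fin 2) ℂ)
    (hA₀ : A₀ = Matrix.of fun i j => (Ω i j).coeff (-(n : ℤ)))
    (Δ : LaurentSeries ℂ)
    (hΔ : Δ = (Matrix.trace Ω) ^ 2 - 4 * Ω.det) :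
    -- unramified case: distinct eigenvalues of A₀
    (((Matrix.trace A₀) ^ 2 - 4 * A₀.det ≠ 0) →
      (∀ m : ℤ, m < -(2 * n : ℤ) → Δ.coeff m = 0) ∧ Δ.coeff (-(2 * n : ℤ)) ≠ 0) ∧
    -- ramified case: A₀ a nontrivial Jordan block, c₁ ≠ 0
    (∀ a₀ b₀ : ℂ, A₀ = Matrix.of !![a₀, b₀; 0, a₀] → b₀ ≠ 0 →
      (Ω 1 0).coeff (-(n : ℤ) + 1) ≠ 0 →
      (∀ m : ℤ, m < -(2 * n : ℤ) + 1 → Δ.coeff m = 0) ∧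
        Δ.coeff (-(2 * n : ℤ) + 1) ≠ 0) := by
  set N : ℤ := -(n : ℤ) with hN
  have hNN : -(2 * n : ℤ) = N + N := by rw [hN]; ring
  have hα : ∀ m, m < N → (Ω 0 0).coeff m = 0 := hpole 0 0
  have hβ : ∀ m, m < N → (Ω 0 1).coeff m = 0 := hpole 0 1
  have hγ : ∀ m, m < N → (Ω 1 0).coeff m = 0 := hpole 1 0
  have hδ : ∀ m, m < N → (Ω 1 1).coeff m = 0 := hpole 1 1
  have hTc : ∀ m, (Matrix.trace Ω).coeff m = (Ω 0 0).coeff m + (Ω 1 1).coeff m := by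
    intro m; rw [Matrix.trace_fin_two, HahnSeries.coeff_add]
  have hT : ∀ m, m < N → (Matrix.trace Ω).coeff m = 0 := by
    intro m hm; rw [hTc, hα m hm, hδ m hm, add_zero]
  have hDc : ∀ m, Ω.det.coeff m = (Ω 0 0 * Ω 1 1).coeff m - (Ω 0 1 * Ω 1 0).coeff m := by
    intro m; rw [Matrix.det_fin_two, HahnSeries.coeff_sub]
  have hΔc : ∀ m, Δ.coeff m = ((Matrix.trace Ω) * (Matrix.trace Ω)).coeff m
      - 4 * Ω.det.coeff m := by
    intro m
    rw [hΔ, HahnSeries.coeff_sub, pow_two, four_eq, HahnSeries.coeff_single_zero_mul]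
  have hA : ∀ i j, A₀ i j = (Ω i j).coeff N := by
    intro i j; rw [hA₀]; rfl
  -- vanishing below 2N, for both cases
  have hvan : ∀ m : ℤ, m < N + N → Δ.coeff m = 0 := by
    intro m hm
    rw [hΔc, hDc, coeff_mul_lt _ _ hT hT hm, coeff_mul_lt _ _ hα hδ hm,
      coeff_mul_lt _ _ hβ hγ hm]
    ring
  -- value at 2N
  have hbot : Δ.coeff (N + N) = (Matrix.trace A₀) ^ 2 - 4 * A₀.det := by
    rw [hΔc, hDc, coeff_mul_bot _ _ hT hT, coeff_mul_bot _ _ hα hδ,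
      coeff_mul_bot _ _ hβ hγ, hTc, Matrix.trace_fin_two, Matrix.det_fin_two,
      hA 0 0, hA 1 1, hA 0 1, hA 1 0]
    ring
  constructor
  · intro hne
    refine ⟨fun m hm => hvan m (by omega), ?_⟩
    rw [hNN, hbot]; exact hne
  · intro a₀ b₀ hJ hb₀ hc₁
    have e00 : (Ω 0 0).coeff N = a₀ := by rw [← hA 0 0, hJ]; rfl
    have e01 : (Ω 0 1).coeff N = b₀ := by rw [← hA 0 1, hJ]; rfl
    have e10 : (Ω 1 0).coeff N = 0 := by rw [← hA 1 0, hJ]; rfl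
    have e11 : (Ω 1 1).coeff N = a₀ := by rw [← hA 1 1, hJ]; rfl
    have hbot0 : Δ.coeff (N + N) = 0 := by
      rw [hbot, Matrix.trace_fin_two, Matrix.det_fin_two, hA 0 0, hA 1 1, hA 0 1, hA 1 0,
        e00, e01, e10, e11]
      ring
    constructor
    · intro m hm
      rcases lt_or_eq_of_le (by omega : m ≤ N + N) with h | h
      · exact hvan m h
      · rw [h, hbot0]
    · have hval : Δ.coeff (-(2 * n : ℤ) + 1) = 4 * (b₀ * (Ω 1 0).coeff (N + 1)) := by
        rw [hNN, hΔc, hDc, coeff_mul_succ _ _ hT hT, coeff_mul_succ _ _ hα hδ,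
          coeff_mul_succ _ _ hβ hγ, hTc, hTc, e00, e01, e10, e11]
        ring
      rw [hval]
      exact mul_ne_zero (by norm_num) (mul_ne_zero hb₀ hc₁)


end
end

section
/- Let Ω = (A₀/z^n + A₁/z^{n-1} + ⋯)dz be a 2×2 connection matrix with A₀ = [[a₀,b₀],[0,a₀]], b₀ ≠ 0, and suppose the (2,1)-entry of A₁ vanishes. Then the meromorphic gauge transformation M = diag(1, z) transforms the leading coefficient into the scalar matrix a₀·I; consequently, after twisting by the rank-one connection d − a₀ dz/z^n, the pole order of the connection strictly decreases. -/
set_option maxHeartbeats 1000000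

noncomputable section

namespace JordanAux

abbrev zz : LaurentSeries ℂ := HahnSeries.single 1 1
abbrev ww : LaurentSeries ℂ := HahnSeries.single (-1) 1

lemma hzw : zz * ww = 1 := by
  rw [HahnSeries.single_mul_single, mul_one, show (1:ℤ) + (-1) = 0 by ring,
    HahnSeries.single_zero_one]

lemma wmul_coeff (f : LaurentSeries ℂ) (m : ℤ) : (ww * f).coeff m = f.coeff (m + 1) := by
  rw [show m = (m + 1) + (-1) by ring, HahnSeries.coeff_single_mul_add, one_mul]
  congr 1; ring

lemma mulz_coeff (f : LaurentSeries ℂ) (m : ℤ) : (f * zz).coeff m = f.coeff (m - 1) := by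
  rw [show m = (m - 1) + 1 by ring, HahnSeries.coeff_mul_single_add, mul_one]
  congr 1; ring

lemma lderiv0 : lderiv 0 = 0 := by
  ext n; show ((n+1:ℤ):ℂ) * (0 : LaurentSeries ℂ).coeff (n+1) = 0
  simp

lemma lderiv1 : lderiv 1 = 0 := by
  ext n; show ((n+1:ℤ):ℂ) * (1 : LaurentSeries ℂ).coeff (n+1) = 0
  rw [← HahnSeries.single_zero_one, HahnSeries.coeff_single]
  by_cases h : n + 1 = (0:ℤ)
  · simp [h]
  · simp [h]

lemma lderivz : lderiv zz = 1 := by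
  ext n
  show ((n+1:ℤ):ℂ) * (zz).coeff (n+1) = _
  rw [← HahnSeries.single_zero_one, HahnSeries.coeff_single, HahnSeries.coeff_single]
  by_cases h : n = (0:ℤ)
  · simp [h]
  · have h1 : ¬ (n + 1 = (1:ℤ)) := by omega
    simp [h, h1]

end JordanAux

/-- if `A₀ = [[a₀,b₀],[0,a₀]]` with `b₀ ≠ 0` and the `(2,1)`-entry of
`A₁` vanishes, then the meromorphic gauge transformation `M = diag(1,z)` makes the
leading coefficient scalar, and twisting by `d − a₀ dz/z^n` strictly decreases
the pole order. -/
theorem jordan_block_pole_order_drop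
    (n : ℕ) (hn : 2 ≤ n) (Ω : Matrix (Fin 2) (Fin 2) (LaurentSeries ℂ))
    (hpole : ∀ i j, ∀ m : ℤ, m < -(n : ℤ) → (Ω i j).coeff m = 0)
    (a₀ b₀ : ℂ) (hb₀ : b₀ ≠ 0)
    (hA₀ : (Matrix.of fun i j => (Ω i j).coeff (-(n : ℤ))) = Matrix.of !![a₀, b₀; 0, a₀])
    (hc₁ : (Ω 1 0).coeff (-(n : ℤ) + 1) = 0)
    (M : Matrix (Fin 2) (Fin 2) (LaurentSeries ℂ))
    (hM : M = Matrix.diagonal ![1, HahnSeries.single 1 1]) :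
    -- the transformed leading coefficient is the scalar matrix a₀·I
    ((∀ i j, ∀ m : ℤ, m < -(n : ℤ) → ((gaugeT M Ω) i j).coeff m = 0) ∧
      (Matrix.of fun i j => ((gaugeT M Ω) i j).coeff (-(n : ℤ)))
        = a₀ • (1 : Matrix (Fin 2) (Fin 2) ℂ)) ∧
    -- after twisting by d − a₀ dz/zⁿ the pole order strictly decreases
    (∀ i j, ∀ m : ℤ, m < -((n : ℤ) - 1) →
      ((gaugeT M Ω + (Matrix.scalar (Fin 2)) (HahnSeries.single (-(n : ℤ)) (-a₀))) i j).coeff m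
        = 0) := by
  open JordanAux in
  subst hM
  have hMinv : (Matrix.diagonal ![(1 : LaurentSeries ℂ), zz])⁻¹ = Matrix.diagonal ![1, ww] := by
    apply Matrix.inv_eq_right_inv
    rw [Matrix.diagonal_mul_diagonal]
    ext i j
    fin_cases i <;> fin_cases j <;>
      simp [Matrix.diagonal, Matrix.one_apply, hzw]
  have hg : ∀ i j, gaugeT (Matrix.diagonal ![(1 : LaurentSeries ℂ), zz]) Ω i j
      = ![(1 : LaurentSeries ℂ), ww] i * Ω i j * ![(1 : LaurentSeries ℂ), zz] j
        + Matrix.diagonal ![(0 : LaurentSeries ℂ), ww] i j := by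
    intro i j
    rw [gaugeT, hMinv]
    have hmap : (Matrix.diagonal ![(1 : LaurentSeries ℂ), zz]).map lderiv
        = Matrix.diagonal ![(0 : LaurentSeries ℂ), 1] := by
      rw [Matrix.diagonal_map lderiv0]
      ext a b
      fin_cases a <;> fin_cases b <;> simp [Matrix.diagonal, lderiv1, lderivz]
    rw [hmap, Matrix.diagonal_mul_diagonal, Matrix.add_apply, Matrix.mul_diagonal,
      Matrix.diagonal_mul]
    congr 1
    fin_cases i <;> fin_cases j <;> simp [Matrix.diagonal]
  have h00 : (Ω 0 0).coeff (-(n:ℤ)) = a₀ := by exact congrFun (congrFun hA₀ 0) 0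
  have h10 : (Ω 1 0).coeff (-(n:ℤ)) = 0 := by exact congrFun (congrFun hA₀ 1) 0
  have h11 : (Ω 1 1).coeff (-(n:ℤ)) = a₀ := by exact congrFun (congrFun hA₀ 1) 1
  have hwc : ∀ m : ℤ, m ≠ -1 → (ww).coeff m = 0 := fun m hm =>
    HahnSeries.coeff_single_of_ne hm
  have e00 : ∀ m : ℤ, (gaugeT (Matrix.diagonal ![(1 : LaurentSeries ℂ), zz]) Ω 0 0).coeff m
      = (Ω 0 0).coeff m := by
    intro m; rw [hg]; simp [Matrix.diagonal]
  have e01 : ∀ m : ℤ, (gaugeT (Matrix.diagonal ![(1 : LaurentSeries ℂ), zz]) Ω 0 1).coeff m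
      = (Ω 0 1).coeff (m - 1) := by
    intro m; rw [hg]
    have : Matrix.diagonal ![(0 : LaurentSeries ℂ), ww] 0 1 = 0 :=
      Matrix.diagonal_apply_ne _ (by decide)
    rw [this, add_zero]
    simp [mulz_coeff]
  have e10 : ∀ m : ℤ, (gaugeT (Matrix.diagonal ![(1 : LaurentSeries ℂ), zz]) Ω 1 0).coeff m
      = (Ω 1 0).coeff (m + 1) := by
    intro m; rw [hg]
    have : Matrix.diagonal ![(0 : LaurentSeries ℂ), ww] 1 0 = 0 :=
      Matrix.diagonal_apply_ne _ (by decide)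
    rw [this, add_zero]
    simp [wmul_coeff]
  have e11 : ∀ m : ℤ, (gaugeT (Matrix.diagonal ![(1 : LaurentSeries ℂ), zz]) Ω 1 1).coeff m
      = (Ω 1 1).coeff m + ww.coeff m := by
    intro m
    have hd : Matrix.diagonal ![(0 : LaurentSeries ℂ), ww] 1 1 = ww :=
      Matrix.diagonal_apply_eq _ _
    rw [hg, hd, HahnSeries.coeff_add]
    congr 1
    show (ww * Ω 1 1 * zz).coeff m = _
    rw [mulz_coeff, wmul_coeff]
    congr 1; ring
  refine ⟨⟨?_, ?_⟩, ?_⟩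
  · intro i j m hm
    fin_cases i <;> fin_cases j <;> simp only [Fin.zero_eta, Fin.mk_one]
    · rw [e00]; exact hpole 0 0 m hm
    · rw [e01]; exact hpole 0 1 _ (by omega)
    · rcases lt_or_eq_of_le (by omega : m + 1 ≤ -(n:ℤ)) with h | h
      · rw [e10]; exact hpole 1 0 _ h
      · rw [e10, h, h10]
    · rw [e11, hpole 1 1 m hm, hwc m (by omega)]; ring
  · ext i j
    fin_cases i <;> fin_cases j <;>
      simp only [Fin.zero_eta, Fin.mk_one, Matrix.of_apply, Matrix.smul_apply,
        Matrix.one_apply, smul_eq_mul]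
    · rw [e00, h00]; norm_num
    · rw [e01, hpole 0 1 _ (by omega)]; norm_num
    · rw [e10, hc₁]; norm_num
    · rw [e11, h11, hwc _ (by omega)]; norm_num
  · intro i j m hm
    have hm' : m ≤ -(n:ℤ) := by omega
    have hsc : ∀ i j : Fin 2,
        ((Matrix.scalar (Fin 2)) (HahnSeries.single (-(n : ℤ)) (-a₀)) i j).coeff m
          = if i = j ∧ m = -(n:ℤ) then -a₀ else 0 := by
      intro i j
      rw [Matrix.scalar_apply]
      by_cases hij : i = j
      · subst hij
        rw [Matrix.diagonal_apply_eq, HahnSeries.coeff_single]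
        by_cases h : m = -(n:ℤ) <;> simp [h]
      · rw [Matrix.diagonal_apply_ne _ hij]
        simp [hij]
    rw [Matrix.add_apply, HahnSeries.coeff_add, hsc]
    fin_cases i <;> fin_cases j <;> simp only [Fin.zero_eta, Fin.mk_one]
    · rw [e00]
      rcases lt_or_eq_of_le hm' with h | h
      · rw [hpole 0 0 m h, if_neg (by omega), add_zero]
      · rw [h, h00]; simp
    · rw [e01, hpole 0 1 _ (by omega), if_neg (by simp), add_zero]
    · rw [e10, if_neg (by simp), add_zero]
      rcases lt_or_eq_of_le (by omega : m + 1 ≤ -(n:ℤ) + 1) with h | h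
      · rcases lt_or_eq_of_le (by omega : m + 1 ≤ -(n:ℤ)) with h2 | h2
        · exact hpole 1 0 _ h2
        · rw [h2, h10]
      · rw [h]; exact hc₁
    · rw [e11, hwc m (by omega)]
      rcases lt_or_eq_of_le hm' with h | h
      · rw [hpole 1 1 m h, if_neg (by omega)]; ring
      · rw [h, h11]; simp

end
end

section
/- Let Ω be a 2×2 connection matrix at z=0 of the form Ω = (A₀/z^n + A₁/z^{n-1} + ⋯)dz with n ≥ 2, A₀ = [[a₀,b₀],[0,a₀]], b₀ ≠ 0, and the (2,1)-entry c₁ of A₁ nonzero. After substituting z = ζ² and applying the gauge transformation Y = diag(1, ζ)·Ȳ, the resulting connection matrix equals 2(A₀/ζ^{2n−1} + B/ζ^{2n−2} + ⋯)dζ where A₀ there is the scalar part diag(a₀,a₀) and B = [[0,b₀],[c₁,0]] has distinct nonzero eigenvalues ±√(b₀c₁). -/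
set_option maxHeartbeats 1000000

noncomputable section

/-- Substitution `z = ζ²` on formal Laurent series (`f(z) ↦ f(ζ²)`). -/
def sqz (f : LaurentSeries ℂ) : LaurentSeries ℂ where
  coeff n := if 2 ∣ n then f.coeff (n / 2) else 0
  isPWO_support' := by
    have h : (Function.support fun n : ℤ => if 2 ∣ n then f.coeff (n / 2) else 0) ⊆
        (fun n : ℤ => 2 * n) '' (Function.support f.coeff) := by
      intro n hn
      simp only [Function.mem_support] at hn
      by_cases h2 : 2 ∣ n
      · exact ⟨n / 2, fun h => hn (by simp [h2, h]), by show 2 * (n / 2) = n; omega⟩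
      · simp [h2] at hn
    exact (f.isPWO_support'.image_of_monotoneOn
      (fun a _ b _ hab => by omega)).mono h

/-- Pullback of the 1-form `f(z)dz` under `z = ζ²`, namely `2ζ·f(ζ²) dζ`. -/
def pullbackSq (f : LaurentSeries ℂ) : LaurentSeries ℂ :=
  2 * HahnSeries.single 1 1 * sqz f


lemma single_mul_coeff' (a m : ℤ) (r : ℂ) (x : LaurentSeries ℂ) :
    (HahnSeries.single a r * x).coeff m = r * x.coeff (m - a) := by
  have h := HahnSeries.coeff_single_mul_add (r := r) (x := x) (a := m - a) (b := a)
  rwa [sub_add_cancel] at h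

lemma mul_single_coeff' (a m : ℤ) (r : ℂ) (x : LaurentSeries ℂ) :
    (x * HahnSeries.single a r).coeff m = x.coeff (m - a) * r := by
  have h := HahnSeries.coeff_mul_single_add (r := r) (x := x) (a := m - a) (b := a)
  rwa [sub_add_cancel] at h

lemma lderiv_one : lderiv (1 : LaurentSeries ℂ) = 0 := by
  ext n
  show ((n + 1 : ℤ) : ℂ) * (1 : LaurentSeries ℂ).coeff (n + 1) = 0
  rw [HahnSeries.coeff_one]
  split_ifs with h
  · rw [h]; norm_num
  · rw [mul_zero]

lemma lderiv_zero : lderiv (0 : LaurentSeries ℂ) = 0 := by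
  ext n
  show ((n + 1 : ℤ) : ℂ) * (0 : LaurentSeries ℂ).coeff (n + 1) = 0
  rw [HahnSeries.coeff_zero, mul_zero]

lemma lderiv_zeta : lderiv (HahnSeries.single (1:ℤ) (1:ℂ)) = 1 := by
  ext n
  show ((n + 1 : ℤ) : ℂ) * (HahnSeries.single (1:ℤ) (1:ℂ)).coeff (n + 1)
      = (1 : LaurentSeries ℂ).coeff n
  rw [HahnSeries.coeff_one, HahnSeries.coeff_single]
  split_ifs with h h2 h2
  · rw [h2]; norm_num
  · omega
  · omega
  · rw [mul_zero]

lemma zeta_mul_inv : (HahnSeries.single (1:ℤ) (1:ℂ)) * HahnSeries.single (-1) 1 = 1 := by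
  rw [HahnSeries.single_mul_single]; norm_num [HahnSeries.single_zero_one]

lemma pullbackSq_coeff (f : LaurentSeries ℂ) (m : ℤ) :
    (pullbackSq f).coeff m = if 2 ∣ (m - 1) then 2 * f.coeff ((m - 1) / 2) else 0 := by
  rw [pullbackSq, mul_assoc, two_mul, HahnSeries.coeff_add, single_mul_coeff', one_mul]
  have hs : (sqz f).coeff (m - 1) = if 2 ∣ (m - 1) then f.coeff ((m - 1) / 2) else 0 := rfl
  rw [hs]
  split_ifs <;> ring

/-- in the ramified case, after the base change `z = ζ²` and the gauge
`Y = diag(1,ζ)Ȳ`, the connection matrix becomes `2(a₀I/ζ^{2n−1} + B/ζ^{2n−2} + ⋯)dζ`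
with `B = [[0,b₀],[c₁,0]]` having distinct nonzero eigenvalues `±√(b₀c₁)`. -/
theorem ramified_base_change
    (n : ℕ) (hn : 2 ≤ n) (Ω : Matrix (Fin 2) (Fin 2) (LaurentSeries ℂ))
    (hpole : ∀ i j, ∀ m : ℤ, m < -(n : ℤ) → (Ω i j).coeff m = 0)
    (a₀ b₀ c₁ : ℂ) (hb₀ : b₀ ≠ 0)
    (hA₀ : (Matrix.of fun i j => (Ω i j).coeff (-(n : ℤ))) = Matrix.of !![a₀, b₀; 0, a₀])
    (hc₁ : (Ω 1 0).coeff (-(n : ℤ) + 1) = c₁) (hc₁ne : c₁ ≠ 0)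
    (M Ωb : Matrix (Fin 2) (Fin 2) (LaurentSeries ℂ))
    (hM : M = Matrix.diagonal ![1, HahnSeries.single 1 1])
    (hΩb : Ωb = gaugeT M (Ω.map pullbackSq)) :
    -- pole order 2n − 1 in ζ
    (∀ i j, ∀ m : ℤ, m < -(2 * n : ℤ) + 1 → (Ωb i j).coeff m = 0) ∧
    -- leading term 2a₀·I at order ζ^{-(2n-1)}
    (Matrix.of fun i j => (Ωb i j).coeff (-(2 * n : ℤ) + 1))
      = (2 * a₀) • (1 : Matrix (Fin 2) (Fin 2) ℂ) ∧
    -- subleading term 2B at order ζ^{-(2n-2)}, B = [[0,b₀],[c₁,0]]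
    (Matrix.of fun i j => (Ωb i j).coeff (-(2 * n : ℤ) + 2))
      = (2 : ℂ) • Matrix.of !![0, b₀; c₁, 0] ∧
    -- B has distinct nonzero eigenvalues ±√(b₀c₁)
    (∃ s : ℂ, s ≠ 0 ∧ s ^ 2 = b₀ * c₁ ∧
      Matrix.trace (Matrix.of !![0, b₀; c₁, 0]) = s + (-s) ∧
      (Matrix.of !![0, b₀; c₁, 0]).det = s * (-s)) := by
  subst hΩb hM
  set ζ : LaurentSeries ℂ := HahnSeries.single (1:ℤ) (1:ℂ) with hζ
  set ξ : LaurentSeries ℂ := HahnSeries.single (-1:ℤ) (1:ℂ) with hξ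
  have hMinv : (Matrix.diagonal ![1, ζ])⁻¹ = Matrix.diagonal ![(1 : LaurentSeries ℂ), ξ] := by
    apply Matrix.inv_eq_right_inv
    rw [Matrix.diagonal_mul_diagonal]
    ext i j
    fin_cases i <;> fin_cases j <;>
      simp [Matrix.diagonal_apply, Matrix.one_apply, hζ, hξ, zeta_mul_inv]
  set Ω' := Ω.map pullbackSq with hΩ'
  have h00 : gaugeT (Matrix.diagonal ![1, ζ]) Ω' 0 0 = Ω' 0 0 := by
    rw [gaugeT, hMinv]
    simp [gaugeT, hMinv, Matrix.mul_apply, Fin.sum_univ_two, Matrix.diagonal_apply,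
      Matrix.map_apply, lderiv_one, lderiv_zeta, lderiv_zero, hζ, hξ]
  have h01 : gaugeT (Matrix.diagonal ![1, ζ]) Ω' 0 1 = Ω' 0 1 * ζ := by
    rw [gaugeT, hMinv]
    simp [gaugeT, hMinv, Matrix.mul_apply, Fin.sum_univ_two, Matrix.diagonal_apply,
      Matrix.map_apply, lderiv_one, lderiv_zeta, lderiv_zero, hζ, hξ]
  have h10 : gaugeT (Matrix.diagonal ![1, ζ]) Ω' 1 0 = ξ * Ω' 1 0 := by
    rw [gaugeT, hMinv]
    simp [gaugeT, hMinv, Matrix.mul_apply, Fin.sum_univ_two, Matrix.diagonal_apply,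
      Matrix.map_apply, lderiv_one, lderiv_zeta, lderiv_zero, hζ, hξ]
  have h11 : gaugeT (Matrix.diagonal ![1, ζ]) Ω' 1 1 = ξ * Ω' 1 1 * ζ + ξ := by
    rw [gaugeT, hMinv]
    simp [gaugeT, hMinv, Matrix.mul_apply, Fin.sum_univ_two, Matrix.diagonal_apply,
      Matrix.map_apply, lderiv_one, lderiv_zeta, lderiv_zero, hζ, hξ, mul_assoc]
  have e00 : (Ω 0 0).coeff (-(n:ℤ)) = a₀ := by
    have := congrFun (congrFun hA₀ 0) 0; exact this.trans rfl
  have e01 : (Ω 0 1).coeff (-(n:ℤ)) = b₀ := by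
    have := congrFun (congrFun hA₀ 0) 1; exact this.trans rfl
  have e10 : (Ω 1 0).coeff (-(n:ℤ)) = 0 := by
    have := congrFun (congrFun hA₀ 1) 0; exact this.trans rfl
  have e11 : (Ω 1 1).coeff (-(n:ℤ)) = a₀ := by
    have := congrFun (congrFun hA₀ 1) 1; exact this.trans rfl
  refine ⟨?_, ?_, ?_, ?_⟩
  · intro i j m hm
    fin_cases i <;> fin_cases j <;> simp only [Fin.zero_eta, Fin.mk_one]
    · rw [h00, hΩ', Matrix.map_apply, pullbackSq_coeff]
      split_ifs with hd
      · rw [hpole 0 0 _ (by omega)]; ring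
      · rfl
    · rw [h01, mul_single_coeff', hΩ', Matrix.map_apply, pullbackSq_coeff]
      split_ifs with hd
      · rw [hpole 0 1 _ (by omega)]; ring
      · ring
    · rw [h10, single_mul_coeff', hΩ', Matrix.map_apply, pullbackSq_coeff]
      split_ifs with hd
      · by_cases he : (m - -1 - 1) / 2 = -(n:ℤ)
        · rw [he, e10]; ring
        · rw [hpole 1 0 _ (by omega)]; ring
      · ring
    · rw [h11, HahnSeries.coeff_add, mul_single_coeff', single_mul_coeff', one_mul, mul_one,
        show m - 1 - -1 = m from by ring, hΩ', Matrix.map_apply, pullbackSq_coeff, hξ,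
        HahnSeries.coeff_single, if_neg (show ¬ m = -1 by omega), add_zero]
      split_ifs with hd
      · rw [hpole 1 1 _ (by omega)]; ring
      · rfl
  · ext i j
    fin_cases i <;> fin_cases j <;> simp only [Fin.zero_eta, Fin.mk_one]
    · rw [Matrix.of_apply, h00, hΩ', Matrix.map_apply, pullbackSq_coeff,
        if_pos (show (2:ℤ) ∣ (-(2*(n:ℤ)) + 1 - 1) by omega),
        show (-(2*(n:ℤ)) + 1 - 1) / 2 = -(n:ℤ) from by omega, e00]
      simp [Matrix.one_apply]
    · rw [Matrix.of_apply, h01, mul_single_coeff', hΩ', Matrix.map_apply, pullbackSq_coeff,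
        if_neg (show ¬ (2:ℤ) ∣ (-(2*(n:ℤ)) + 1 - 1 - 1) by omega)]
      simp [Matrix.one_apply]
    · rw [Matrix.of_apply, h10, single_mul_coeff', hΩ', Matrix.map_apply, pullbackSq_coeff,
        if_neg (show ¬ (2:ℤ) ∣ (-(2*(n:ℤ)) + 1 - -1 - 1) by omega)]
      simp [Matrix.one_apply]
    · rw [Matrix.of_apply, h11, HahnSeries.coeff_add, mul_single_coeff', single_mul_coeff',
        one_mul, mul_one, show -(2*(n:ℤ)) + 1 - 1 - -1 = -(2*(n:ℤ)) + 1 from by ring,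
        hΩ', Matrix.map_apply, pullbackSq_coeff,
        if_pos (show (2:ℤ) ∣ (-(2*(n:ℤ)) + 1 - 1) by omega),
        show (-(2*(n:ℤ)) + 1 - 1) / 2 = -(n:ℤ) from by omega, e11, hξ,
        HahnSeries.coeff_single, if_neg (show ¬ -(2*(n:ℤ)) + 1 = -1 by omega), add_zero]
      simp [Matrix.one_apply]
  · ext i j
    fin_cases i <;> fin_cases j <;> simp only [Fin.zero_eta, Fin.mk_one]
    · rw [Matrix.of_apply, h00, hΩ', Matrix.map_apply, pullbackSq_coeff,
        if_neg (show ¬ (2:ℤ) ∣ (-(2*(n:ℤ)) + 2 - 1) by omega)]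
      simp; rfl
    · rw [Matrix.of_apply, h01, mul_single_coeff', hΩ', Matrix.map_apply, pullbackSq_coeff,
        if_pos (show (2:ℤ) ∣ (-(2*(n:ℤ)) + 2 - 1 - 1) by omega),
        show (-(2*(n:ℤ)) + 2 - 1 - 1) / 2 = -(n:ℤ) from by omega, e01]
      simp; rfl
    · rw [Matrix.of_apply, h10, single_mul_coeff', hΩ', Matrix.map_apply, pullbackSq_coeff,
        if_pos (show (2:ℤ) ∣ (-(2*(n:ℤ)) + 2 - -1 - 1) by omega),
        show (-(2*(n:ℤ)) + 2 - -1 - 1) / 2 = -(n:ℤ) + 1 from by omega, hc₁]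
      simp; rfl
    · rw [Matrix.of_apply, h11, HahnSeries.coeff_add, mul_single_coeff', single_mul_coeff',
        one_mul, mul_one, show -(2*(n:ℤ)) + 2 - 1 - -1 = -(2*(n:ℤ)) + 2 from by ring,
        hΩ', Matrix.map_apply, pullbackSq_coeff,
        if_neg (show ¬ (2:ℤ) ∣ (-(2*(n:ℤ)) + 2 - 1) by omega), hξ,
        HahnSeries.coeff_single, if_neg (show ¬ -(2*(n:ℤ)) + 2 = -1 by omega), add_zero]
      simp; rfl
  · obtain ⟨s, hs⟩ := IsAlgClosed.exists_pow_nat_eq (b₀ * c₁) (n := 2) two_pos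
    refine ⟨s, ?_, hs, ?_, ?_⟩
    · intro h
      exact mul_ne_zero hb₀ hc₁ne (by rw [← hs, h]; ring)
    · rw [show Matrix.of !![(0:ℂ), b₀; c₁, 0] = !![(0:ℂ), b₀; c₁, 0] from rfl,
        Matrix.trace_fin_two_of]; ring
    · rw [show Matrix.of !![(0:ℂ), b₀; c₁, 0] = !![(0:ℂ), b₀; c₁, 0] from rfl,
        Matrix.det_fin_two_of, ← hs]; ring

end
end

section
/- Consider the connection matrix Ω₀ = [[0, 1/P(x)],[c₀(x), d₀(x)]]dx near a point x = q where P(q) ≠ 0, with c₀(x) = p/(x−q) + ĉ(x) and d₀(x) = −1/(x−q) + d̂(x), where ĉ, d̂ are holomorphic at q. Then the residue matrix at x = q has eigenvalues 0 and −1, and the singularity x = q is apparent (removable after the elementary transformation Y₀ = MỸ₀ with M = [[1,0],[p, x−q]]) if and only if ĉ(q) + p·d̂(q) − p²/P(q) = 0. -/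
set_option maxHeartbeats 1000000

noncomputable section

/-- The rational function `x ↦ f(x + t)`: recentering at the point `t`. -/
def shiftRF (t : ℂ) (f : RatFunc ℂ) : RatFunc ℂ :=
  algebraMap (Polynomial ℂ) (RatFunc ℂ) (f.num.comp (Polynomial.X + Polynomial.C t)) /
    algebraMap (Polynomial ℂ) (RatFunc ℂ) (f.denom.comp (Polynomial.X + Polynomial.C t))

/-- The `m`-th coefficient of the Laurent expansion of `f` at the point `t`. -/
def lcoeff (t : ℂ) (m : ℤ) (f : RatFunc ℂ) : ℂ :=
  (@algebraMap (RatFunc ℂ) (LaurentSeries ℂ) _ _ (RatFunc.liftAlgebra ℂ (LaurentSeries ℂ))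
    (shiftRF t f)).coeff m

/-- The residue at `t` of the rational 1-form `f dx`. -/
def resAt (t : ℂ) (f : RatFunc ℂ) : ℂ := lcoeff t (-1) f

/-- `f` is holomorphic at the point `t`. -/
def holoAt (t : ℂ) (f : RatFunc ℂ) : Prop := ∀ m : ℤ, m < 0 → lcoeff t m f = 0

/-- The rational function `x ↦ f(1/x)`. -/
def invSub (f : RatFunc ℂ) : RatFunc ℂ :=
  Polynomial.aeval (RatFunc.X : RatFunc ℂ)⁻¹ f.num /
    Polynomial.aeval (RatFunc.X : RatFunc ℂ)⁻¹ f.denom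

/-- Derivative of a rational function. -/
def rderiv (f : RatFunc ℂ) : RatFunc ℂ :=
  algebraMap (Polynomial ℂ) (RatFunc ℂ)
      (Polynomial.derivative f.num * f.denom - f.num * Polynomial.derivative f.denom) /
    algebraMap (Polynomial ℂ) (RatFunc ℂ) (f.denom ^ 2)

/-- The gauge transformation `Ω ↦ M⁻¹ Ω M + M⁻¹ dM` for rational matrices
(1-forms `f dx` identified with their rational coefficient `f`). -/
def gaugeR (M Ω : Matrix (Fin 2) (Fin 2) (RatFunc ℂ)) :
    Matrix (Fin 2) (Fin 2) (RatFunc ℂ) :=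
  M⁻¹ * Ω * M + M⁻¹ * (M.map rderiv)

/-! ### Auxiliary lemmas -/


open Polynomial in
/-- the shift `f(x) ↦ f(x+t)` as an algebra hom on `RatFunc ℂ`. -/
def shiftAH (t : ℂ) : RatFunc ℂ →ₐ[ℂ] RatFunc ℂ :=
  RatFunc.liftAlgHom
    ((IsScalarTower.toAlgHom ℂ (Polynomial ℂ) (RatFunc ℂ)).comp
      (Polynomial.aeval (Polynomial.X + Polynomial.C t)))
    (by
      apply nonZeroDivisors_le_comap_nonZeroDivisors_of_injective
      intro a b hab
      simp only [AlgHom.coe_comp, Function.comp_apply, IsScalarTower.coe_toAlgHom',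
        ← Polynomial.comp_eq_aeval] at hab
      have hab' := RatFunc.algebraMap_injective ℂ hab
      have := congrArg (fun A => A.comp (Polynomial.X - Polynomial.C t)) hab'
      simpa [Polynomial.comp_assoc] using this)

open Polynomial in
lemma shiftAH_algebraMap (t : ℂ) (A : Polynomial ℂ) :
    shiftAH t (algebraMap (Polynomial ℂ) (RatFunc ℂ) A)
      = algebraMap (Polynomial ℂ) (RatFunc ℂ) (A.comp (Polynomial.X + Polynomial.C t)) := by
  rw [shiftAH, RatFunc.liftAlgHom_apply, RatFunc.num_algebraMap, RatFunc.denom_algebraMap]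
  simp [← Polynomial.comp_eq_aeval]

lemma shiftRF_eq (t : ℂ) (f : RatFunc ℂ) : shiftRF t f = shiftAH t f := by
  conv_rhs => rw [← RatFunc.num_div_denom f]
  rw [map_div₀, shiftAH, RatFunc.liftAlgHom_apply, RatFunc.num_algebraMap,
    RatFunc.denom_algebraMap, RatFunc.liftAlgHom_apply, RatFunc.num_algebraMap,
    RatFunc.denom_algebraMap]
  simp [shiftRF, ← Polynomial.comp_eq_aeval]

/-- The Laurent expansion map at `t`, as a ring hom. -/
def Lx (t : ℂ) : RatFunc ℂ →+* LaurentSeries ℂ :=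
  (@algebraMap (RatFunc ℂ) (LaurentSeries ℂ) _ _ (RatFunc.liftAlgebra ℂ (LaurentSeries ℂ))).comp
    (shiftAH t).toRingHom

lemma lcoeff_eq (t : ℂ) (m : ℤ) (f : RatFunc ℂ) : lcoeff t m f = (Lx t f).coeff m := by
  rw [lcoeff, shiftRF_eq]; rfl

open Polynomial in
lemma Lx_algebraMap (t : ℂ) (A : Polynomial ℂ) :
    Lx t (algebraMap (Polynomial ℂ) (RatFunc ℂ) A)
      = HahnSeries.ofPowerSeries ℤ ℂ
          ((A.comp (Polynomial.X + Polynomial.C t) : Polynomial ℂ) : PowerSeries ℂ) := by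
  show @algebraMap (RatFunc ℂ) (LaurentSeries ℂ) _ _ (RatFunc.liftAlgebra ℂ (LaurentSeries ℂ))
    (shiftAH t (algebraMap _ _ A)) = _
  rw [shiftAH_algebraMap]
  exact (RatFunc.coe_coe _).symm

open Polynomial in
lemma lcoeff_algebraMap (t : ℂ) (A : Polynomial ℂ) (m : ℤ) :
    lcoeff t m (algebraMap (Polynomial ℂ) (RatFunc ℂ) A)
      = if m < 0 then 0 else (A.comp (Polynomial.X + Polynomial.C t)).coeff m.natAbs := by
  rw [lcoeff_eq, Lx_algebraMap]
  rw [PowerSeries.coeff_coe]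
  simp [Polynomial.coeff_coe]

open Polynomial in
lemma holo_algebraMap (t : ℂ) (A : Polynomial ℂ) :
    holoAt t (algebraMap (Polynomial ℂ) (RatFunc ℂ) A) := by
  intro m hm; rw [lcoeff_algebraMap, if_pos hm]

lemma lcoeff_add (t : ℂ) (m : ℤ) (f g : RatFunc ℂ) :
    lcoeff t m (f + g) = lcoeff t m f + lcoeff t m g := by
  simp [lcoeff_eq, map_add, HahnSeries.coeff_add]

lemma lcoeff_sub (t : ℂ) (m : ℤ) (f g : RatFunc ℂ) :
    lcoeff t m (f - g) = lcoeff t m f - lcoeff t m g := by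
  simp [lcoeff_eq, map_sub, HahnSeries.coeff_sub]

lemma lcoeff_neg (t : ℂ) (m : ℤ) (f : RatFunc ℂ) :
    lcoeff t m (-f) = -lcoeff t m f := by
  simp [lcoeff_eq, map_neg, HahnSeries.coeff_neg]

lemma lcoeff_zero (t : ℂ) (m : ℤ) : lcoeff t m 0 = 0 := by
  simp [lcoeff_eq, map_zero]

open Polynomial in
lemma LxU (q : ℂ) : Lx q ((RatFunc.X : RatFunc ℂ) - RatFunc.C q) = HahnSeries.single 1 1 := by
  have : (RatFunc.X : RatFunc ℂ) - RatFunc.C q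
      = algebraMap (Polynomial ℂ) (RatFunc ℂ) (Polynomial.X - Polynomial.C q) := by
    simp [RatFunc.algebraMap_X]
  rw [this, Lx_algebraMap]
  simp [Polynomial.sub_comp]

lemma u_ne_zero (q : ℂ) : (RatFunc.X : RatFunc ℂ) - RatFunc.C q ≠ 0 := by
  have : (RatFunc.X : RatFunc ℂ) - RatFunc.C q
      = algebraMap (Polynomial ℂ) (RatFunc ℂ) (Polynomial.X - Polynomial.C q) := by
    simp [RatFunc.algebraMap_X]
  rw [this]
  exact RatFunc.algebraMap_ne_zero (Polynomial.X_sub_C_ne_zero q)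

lemma LxUinv (q : ℂ) :
    Lx q (((RatFunc.X : RatFunc ℂ) - RatFunc.C q)⁻¹) = HahnSeries.single (-1) 1 := by
  rw [map_inv₀, LxU]
  symm
  apply eq_inv_of_mul_eq_one_left
  rw [HahnSeries.single_mul_single]
  norm_num [HahnSeries.single_zero_one]

lemma lcoeff_uinv (q : ℂ) (m : ℤ) :
    lcoeff q m (((RatFunc.X : RatFunc ℂ) - RatFunc.C q)⁻¹) = if m = -1 then 1 else 0 := by
  rw [lcoeff_eq, LxUinv, HahnSeries.coeff_single]
  split <;> rfl

lemma Lx_C (t a : ℂ) : Lx t (RatFunc.C a) = HahnSeries.single 0 a := by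
  have : (RatFunc.C a : RatFunc ℂ) = algebraMap (Polynomial ℂ) (RatFunc ℂ) (Polynomial.C a) := by
    simp
  rw [this, Lx_algebraMap]
  simp [HahnSeries.ofPowerSeries_C, HahnSeries.C_apply]

lemma lcoeff_C_mul (t a : ℂ) (m : ℤ) (f : RatFunc ℂ) :
    lcoeff t m (RatFunc.C a * f) = a * lcoeff t m f := by
  rw [lcoeff_eq, map_mul, Lx_C, lcoeff_eq]
  have := HahnSeries.coeff_single_mul_add (r := a) (x := Lx t f) (a := m) (b := (0 : ℤ))
  simpa using this

lemma lcoeff_uinv_mul (q : ℂ) (m : ℤ) (f : RatFunc ℂ) :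
    lcoeff q m (((RatFunc.X : RatFunc ℂ) - RatFunc.C q)⁻¹ * f) = lcoeff q (m + 1) f := by
  rw [lcoeff_eq, map_mul, LxUinv, lcoeff_eq]
  have := HahnSeries.coeff_single_mul_add (r := (1:ℂ)) (x := Lx q f) (a := m + 1) (b := (-1 : ℤ))
  simpa using this

lemma lcoeff_u_mul (q : ℂ) (m : ℤ) (f : RatFunc ℂ) :
    lcoeff q m (((RatFunc.X : RatFunc ℂ) - RatFunc.C q) * f) = lcoeff q (m - 1) f := by
  rw [lcoeff_eq, map_mul, LxU, lcoeff_eq]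
  have := HahnSeries.coeff_single_mul_add (r := (1:ℂ)) (x := Lx q f) (a := m - 1) (b := (1 : ℤ))
  simpa using this

open Polynomial in
lemma Lx_polyinv (q : ℂ) (P : Polynomial ℂ) (hPq : P.eval q ≠ 0) :
    Lx q ((algebraMap (Polynomial ℂ) (RatFunc ℂ) P)⁻¹)
      = HahnSeries.ofPowerSeries ℤ ℂ
          (((P.comp (Polynomial.X + Polynomial.C q) : Polynomial ℂ) : PowerSeries ℂ)⁻¹) := by
  have hc : PowerSeries.constantCoeff
      ((P.comp (Polynomial.X + Polynomial.C q) : Polynomial ℂ) : PowerSeries ℂ) ≠ 0 := by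
    rw [Polynomial.constantCoeff_coe, Polynomial.coeff_zero_eq_eval_zero, Polynomial.eval_comp]
    simpa using hPq
  rw [map_inv₀, Lx_algebraMap]
  symm
  apply eq_inv_of_mul_eq_one_left
  rw [← map_mul, mul_comm, PowerSeries.mul_inv_cancel _ hc, map_one]

open Polynomial in
lemma lcoeff_polyinv (q : ℂ) (P : Polynomial ℂ) (hPq : P.eval q ≠ 0) (m : ℤ) :
    lcoeff q m ((algebraMap (Polynomial ℂ) (RatFunc ℂ) P)⁻¹)
      = if m < 0 then 0
        else PowerSeries.coeff m.natAbs
          (((P.comp (Polynomial.X + Polynomial.C q) : Polynomial ℂ) : PowerSeries ℂ)⁻¹) := by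
  rw [lcoeff_eq, Lx_polyinv q P hPq, PowerSeries.coeff_coe]

open Polynomial in
lemma holo_polyinv (q : ℂ) (P : Polynomial ℂ) (hPq : P.eval q ≠ 0) :
    holoAt q ((algebraMap (Polynomial ℂ) (RatFunc ℂ) P)⁻¹) := by
  intro m hm; rw [lcoeff_polyinv q P hPq, if_pos hm]

open Polynomial in
lemma lcoeff_zero_polyinv (q : ℂ) (P : Polynomial ℂ) (hPq : P.eval q ≠ 0) :
    lcoeff q 0 ((algebraMap (Polynomial ℂ) (RatFunc ℂ) P)⁻¹) = (P.eval q)⁻¹ := by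
  rw [lcoeff_polyinv q P hPq, if_neg (by norm_num)]
  have h0 : ((0:ℤ).natAbs) = 0 := rfl
  rw [h0, PowerSeries.coeff_zero_eq_constantCoeff, PowerSeries.constantCoeff_inv,
    Polynomial.constantCoeff_coe, Polynomial.coeff_zero_eq_eval_zero, Polynomial.eval_comp]
  simp

lemma holo_add {t : ℂ} {f g : RatFunc ℂ} (hf : holoAt t f) (hg : holoAt t g) :
    holoAt t (f + g) := fun m hm => by rw [lcoeff_add, hf m hm, hg m hm, add_zero]

lemma holo_sub {t : ℂ} {f g : RatFunc ℂ} (hf : holoAt t f) (hg : holoAt t g) :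
    holoAt t (f - g) := fun m hm => by rw [lcoeff_sub, hf m hm, hg m hm, sub_zero]

lemma holo_C_mul {t : ℂ} (a : ℂ) {f : RatFunc ℂ} (hf : holoAt t f) :
    holoAt t (RatFunc.C a * f) := fun m hm => by rw [lcoeff_C_mul, hf m hm, mul_zero]

lemma holo_u_mul {q : ℂ} {f : RatFunc ℂ} (hf : holoAt q f) :
    holoAt q (((RatFunc.X : RatFunc ℂ) - RatFunc.C q) * f) := fun m hm => by
  rw [lcoeff_u_mul]; exact hf _ (by omega)

lemma holo_uinv_mul_iff {q : ℂ} {g : RatFunc ℂ} (hg : holoAt q g) :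
    holoAt q (((RatFunc.X : RatFunc ℂ) - RatFunc.C q)⁻¹ * g) ↔ lcoeff q 0 g = 0 := by
  constructor
  · intro h
    have := h (-1) (by norm_num)
    rwa [lcoeff_uinv_mul, neg_add_cancel] at this
  · intro h0 m hm
    rw [lcoeff_uinv_mul]
    rcases eq_or_lt_of_le (by omega : m + 1 ≤ 0) with h | h
    · rw [h, h0]
    · exact hg _ h

lemma rderiv_algebraMap (A : Polynomial ℂ) :
    rderiv (algebraMap (Polynomial ℂ) (RatFunc ℂ) A)
      = algebraMap (Polynomial ℂ) (RatFunc ℂ) (Polynomial.derivative A) := by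
  rw [rderiv, RatFunc.num_algebraMap, RatFunc.denom_algebraMap]
  simp

theorem of_two {α : Type*} (a b c d : α) : Matrix.of !![a, b; c, d] = !![a, b; c, d] := rfl

/-- at a point `q` with `P(q) ≠ 0`, for
`Ω₀ = [[0, 1/P],[p/(x−q) + ĉ, −1/(x−q) + d̂]]dx`, the residue matrix at `q` has
eigenvalues `0` and `−1` (its characteristic polynomial is `X² + X`), and the
singularity is apparent — i.e. removable by the elementary transformation
`M = [[1,0],[p, x−q]]` — iff `ĉ(q) + p·d̂(q) − p²/P(q) = 0`. -/
theorem apparent_singularity_criterion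
    (P : Polynomial ℂ) (q p : ℂ) (hPq : P.eval q ≠ 0)
    (ch dh : RatFunc ℂ) (hch : holoAt q ch) (hdh : holoAt q dh)
    (c₀ d₀ : RatFunc ℂ)
    (hc₀ : c₀ = RatFunc.C p * ((RatFunc.X : RatFunc ℂ) - RatFunc.C q)⁻¹ + ch)
    (hd₀ : d₀ = -((RatFunc.X : RatFunc ℂ) - RatFunc.C q)⁻¹ + dh)
    (Ω₀ M : Matrix (Fin 2) (Fin 2) (RatFunc ℂ))
    (hΩ₀ : Ω₀ = Matrix.of !![0, (algebraMap (Polynomial ℂ) (RatFunc ℂ) P)⁻¹; c₀, d₀])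
    (hM : M = Matrix.of !![1, 0; RatFunc.C p, (RatFunc.X : RatFunc ℂ) - RatFunc.C q]) :
    -- the residue matrix at q is [[0,0],[p,−1]], with eigenvalues 0 and −1
    (Matrix.of fun i j => resAt q (Ω₀ i j)) = Matrix.of !![0, 0; p, -1] ∧
    (Matrix.of !![(0 : ℂ), 0; p, -1]).charpoly = Polynomial.X ^ 2 + Polynomial.X ∧
    -- apparentness criterion
    ((∀ i j, holoAt q ((gaugeR M Ω₀) i j)) ↔
      lcoeff q 0 ch + p * lcoeff q 0 dh - p ^ 2 / P.eval q = 0) := by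
  have hu : ((RatFunc.X : RatFunc ℂ) - RatFunc.C q) ≠ 0 := u_ne_zero q
  have hPi : holoAt q ((algebraMap (Polynomial ℂ) (RatFunc ℂ) P)⁻¹) := holo_polyinv q P hPq
  refine ⟨?_, ?_, ?_⟩
  · -- residue matrix
    have r00 : resAt q (0 : RatFunc ℂ) = 0 := lcoeff_zero q (-1)
    have r01 : resAt q ((algebraMap (Polynomial ℂ) (RatFunc ℂ) P)⁻¹) = 0 :=
      hPi (-1) (by norm_num)
    have r10 : resAt q c₀ = p := by
      rw [resAt, hc₀, lcoeff_add, lcoeff_C_mul, lcoeff_uinv, hch (-1) (by norm_num)]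
      norm_num
    have r11 : resAt q d₀ = -1 := by
      rw [resAt, hd₀, lcoeff_add, lcoeff_neg, lcoeff_uinv, hdh (-1) (by norm_num)]
      norm_num
    ext i j
    fin_cases i <;> fin_cases j <;>
      simp [hΩ₀, r00, r01, r10, r11, of_two]
  · -- charpoly
    rw [Matrix.charpoly, Matrix.det_fin_two]
    simp [Matrix.charmatrix_apply_eq, Matrix.charmatrix_apply_ne, of_two]
    ring
  · -- apparent singularity criterion
    have hMinv : M⁻¹ = Matrix.of !![1, 0;
        -RatFunc.C p * ((RatFunc.X : RatFunc ℂ) - RatFunc.C q)⁻¹,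
        ((RatFunc.X : RatFunc ℂ) - RatFunc.C q)⁻¹] := by
      apply Matrix.inv_eq_right_inv
      rw [hM]
      show (!![1, 0; RatFunc.C p, (RatFunc.X : RatFunc ℂ) - RatFunc.C q]
          * !![1, 0; -RatFunc.C p * ((RatFunc.X : RatFunc ℂ) - RatFunc.C q)⁻¹,
              ((RatFunc.X : RatFunc ℂ) - RatFunc.C q)⁻¹]) = 1
      rw [Matrix.mul_fin_two, Matrix.one_fin_two]
      ext i j
      fin_cases i <;> fin_cases j <;> simp <;> field_simp <;> ring
    have hr1 : rderiv 1 = 0 := by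
      rw [show (1 : RatFunc ℂ) = algebraMap (Polynomial ℂ) (RatFunc ℂ) 1 from (map_one _).symm,
        rderiv_algebraMap]
      simp
    have hr0 : rderiv 0 = 0 := by
      rw [show (0 : RatFunc ℂ) = algebraMap (Polynomial ℂ) (RatFunc ℂ) 0 from (map_zero _).symm,
        rderiv_algebraMap]
      simp
    have hrC : rderiv (RatFunc.C p) = 0 := by
      rw [← RatFunc.algebraMap_C p, rderiv_algebraMap]
      simp
    have hru : rderiv ((RatFunc.X : RatFunc ℂ) - RatFunc.C q) = 1 := by
      have : (RatFunc.X : RatFunc ℂ) - RatFunc.C q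
          = algebraMap (Polynomial ℂ) (RatFunc ℂ) (Polynomial.X - Polynomial.C q) := by
        simp [RatFunc.algebraMap_X]
      rw [this, rderiv_algebraMap]
      simp
    have hmap : M.map rderiv = Matrix.of !![0, 0; 0, 1] := by
      rw [hM]
      ext i j
      fin_cases i <;> fin_cases j <;>
        simp [Matrix.map_apply, hr1, hr0, hrC, hru, of_two]
    set Pi : RatFunc ℂ := (algebraMap (Polynomial ℂ) (RatFunc ℂ) P)⁻¹ with hPidef
    have hg : holoAt q (ch + RatFunc.C p * dh - RatFunc.C (p ^ 2) * Pi) :=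
      holo_sub (holo_add hch (holo_C_mul p hdh)) (holo_C_mul _ hPi)
    have hgl : lcoeff q 0 (ch + RatFunc.C p * dh - RatFunc.C (p ^ 2) * Pi)
        = lcoeff q 0 ch + p * lcoeff q 0 dh - p ^ 2 / P.eval q := by
      rw [lcoeff_sub, lcoeff_add, lcoeff_C_mul, lcoeff_C_mul, lcoeff_zero_polyinv q P hPq,
        div_eq_mul_inv]
    have e00 : gaugeR M Ω₀ 0 0 = RatFunc.C p * Pi := by
      rw [gaugeR, hMinv, hmap, hΩ₀, hM]
      simp [Matrix.mul_apply, Fin.sum_univ_two, Matrix.add_apply, of_two]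
      ring
    have e01 : gaugeR M Ω₀ 0 1 = ((RatFunc.X : RatFunc ℂ) - RatFunc.C q) * Pi := by
      rw [gaugeR, hMinv, hmap, hΩ₀, hM]
      simp [Matrix.mul_apply, Fin.sum_univ_two, Matrix.add_apply, of_two]
      ring
    have e10 : gaugeR M Ω₀ 1 0 = ((RatFunc.X : RatFunc ℂ) - RatFunc.C q)⁻¹
        * (ch + RatFunc.C p * dh - RatFunc.C (p ^ 2) * Pi) := by
      rw [gaugeR, hMinv, hmap, hΩ₀, hM]
      simp only [Matrix.mul_apply, Fin.sum_univ_two, Matrix.add_apply, Matrix.of_apply,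
        Matrix.cons_val', Matrix.cons_val_zero, Matrix.cons_val_one, Matrix.head_cons,
        Matrix.empty_val', Matrix.cons_val_fin_one, Matrix.head_fin_const, Matrix.map_apply, of_two]
      rw [hc₀, hd₀, map_pow]
      ring
    have e11 : gaugeR M Ω₀ 1 1 = dh - RatFunc.C p * Pi := by
      rw [gaugeR, hMinv, hmap, hΩ₀, hM]
      simp only [Matrix.mul_apply, Fin.sum_univ_two, Matrix.add_apply, Matrix.of_apply,
        Matrix.cons_val', Matrix.cons_val_zero, Matrix.cons_val_one, Matrix.head_cons,
        Matrix.empty_val', Matrix.cons_val_fin_one, Matrix.head_fin_const, Matrix.map_apply, of_two]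
      rw [hd₀]
      field_simp
      ring
    constructor
    · intro h
      have h10 := h 1 0
      rw [e10] at h10
      rw [← hgl]
      exact (holo_uinv_mul_iff hg).mp h10
    · intro hcrit i j
      fin_cases i <;> fin_cases j
      · show holoAt q (gaugeR M Ω₀ 0 0)
        rw [e00]; exact holo_C_mul p hPi
      · show holoAt q (gaugeR M Ω₀ 0 1)
        rw [e01]; exact holo_u_mul hPi
      · show holoAt q (gaugeR M Ω₀ 1 0)
        rw [e10]; exact (holo_uinv_mul_iff hg).mpr (by rw [hgl]; exact hcrit)
      · show holoAt q (gaugeR M Ω₀ 1 1)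
        rw [e11]; exact holo_sub hdh (holo_C_mul p hPi)


end
end

section
/- In the unramified diagonalization of Proposition 2.2, the matrix M = [[1, β/(λ⁻−α)],[γ/(λ⁺−δ), 1]] satisfies M⁻¹ΩM = diag(λ⁺, λ⁻), where λ^± are the two eigenvalue 1-forms of Ω = [[α,β],[γ,δ]] (solutions of det(Ω − λI) = 0) and M is holomorphically invertible at z = 0. -/
set_option maxHeartbeats 1000000

noncomputable section

lemma hs_order_ge {f : LaurentSeries ℂ} {k : ℤ} (hf : f ≠ 0)
    (h : ∀ m : ℤ, m < k → f.coeff m = 0) : k ≤ f.order := by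
  by_contra hlt
  exact (mt HahnSeries.coeff_order_eq_zero.mp hf) (h _ (lt_of_not_ge hlt))

lemma hs_mul_coeff_zero (f g : LaurentSeries ℂ)
    (hf : ∀ m : ℤ, m < 1 → f.coeff m = 0) (hg : ∀ m : ℤ, m < 1 → g.coeff m = 0) :
    (f * g).coeff 0 = 0 := by
  by_cases hf0 : f = 0
  · simp [hf0]
  by_cases hg0 : g = 0
  · simp [hg0]
  have h1 : (1:ℤ) ≤ f.order := hs_order_ge hf0 hf
  have h2 : (1:ℤ) ≤ g.order := hs_order_ge hg0 hg
  have : (0:ℤ) < (f * g).order := by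
    rw [HahnSeries.order_mul hf0 hg0]; omega
  exact HahnSeries.coeff_eq_zero_of_lt_order this

/-- Coefficients of `f / x` vanish below 1 when `f` has order `> -n` and `x` has order
exactly `-n`. -/
lemma hs_div_coeff (f x : LaurentSeries ℂ) (n : ℤ)
    (hf : ∀ m : ℤ, m ≤ -n → f.coeff m = 0)
    (hx0 : x ≠ 0) (hxord : x.order = -n) :
    ∀ m : ℤ, m < 1 → (f / x).coeff m = 0 := by
  intro m hm
  by_cases hf0 : f = 0
  · simp [hf0]
  have hford : -n + 1 ≤ f.order := hs_order_ge hf0 (fun m hm => hf m (by omega))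
  have hxinv : x⁻¹ ≠ 0 := inv_ne_zero hx0
  have hinvord : x⁻¹.order = n := by
    have h := HahnSeries.order_mul hx0 hxinv
    rw [mul_inv_cancel₀ hx0, HahnSeries.order_one, hxord] at h
    omega
  have : m < (f / x).order := by
    rw [div_eq_mul_inv, HahnSeries.order_mul hf0 hxinv, hinvord]
    omega
  exact HahnSeries.coeff_eq_zero_of_lt_order this

/-- the matrix `M = [[1, β/(λ⁻−α)],[γ/(λ⁺−δ), 1]]` is holomorphic and
holomorphically invertible at `z = 0` and conjugates `Ω = [[α,β],[γ,δ]]` into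
`diag(λ⁺, λ⁻)`, where `λ±` are the eigenvalue 1-forms of `Ω`. -/
theorem diagonalizing_matrix
    (n : ℕ) (hn : 2 ≤ n) (α β γ δ lp lm : LaurentSeries ℂ)
    (hα : ∀ m : ℤ, m < -(n : ℤ) → α.coeff m = 0)
    (hβ : ∀ m : ℤ, m < -(n : ℤ) → β.coeff m = 0)
    (hγ : ∀ m : ℤ, m < -(n : ℤ) → γ.coeff m = 0)
    (hδ : ∀ m : ℤ, m < -(n : ℤ) → δ.coeff m = 0)
    (θp θm : ℂ) (hθ : θp ≠ θm)
    (hlead : α.coeff (-(n : ℤ)) = θp ∧ δ.coeff (-(n : ℤ)) = θm ∧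
      β.coeff (-(n : ℤ)) = 0 ∧ γ.coeff (-(n : ℤ)) = 0)
    (hlppole : ∀ m : ℤ, m < -(n : ℤ) → lp.coeff m = 0)
    (hlmpole : ∀ m : ℤ, m < -(n : ℤ) → lm.coeff m = 0)
    (hlplead : lp.coeff (-(n : ℤ)) = θp) (hlmlead : lm.coeff (-(n : ℤ)) = θm)
    (hlp : lp ^ 2 - (α + δ) * lp + (α * δ - β * γ) = 0)
    (hlm : lm ^ 2 - (α + δ) * lm + (α * δ - β * γ) = 0)
    (M : Matrix (Fin 2) (Fin 2) (LaurentSeries ℂ))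
    (hM : M = Matrix.of !![1, β / (lm - α); γ / (lp - δ), 1]) :
    MatHolo M ∧ (M.det).coeff 0 ≠ 0 ∧
      M⁻¹ * Matrix.of !![α, β; γ, δ] * M = Matrix.diagonal ![lp, lm] := by
  show (∀ i j, ∀ m : ℤ, m < 0 → (M i j).coeff m = 0) ∧ _
  obtain ⟨hαl, hδl, hβl, hγl⟩ := hlead
  set x := lm - α with hxdef
  set y := lp - δ with hydef
  -- x = lm - α is nonzero of order -n
  have hxc : x.coeff (-(n:ℤ)) = θm - θp := by
    rw [HahnSeries.coeff_sub, hlmlead, hαl]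
  have hx0 : x ≠ 0 := fun h => by
    rw [h] at hxc; simp at hxc
    exact hθ (sub_eq_zero.mp hxc.symm).symm
  have hxord : x.order = -(n:ℤ) := le_antisymm
    (HahnSeries.order_le_of_coeff_ne_zero (by rw [hxc]; exact sub_ne_zero.mpr (Ne.symm hθ)))
    (hs_order_ge hx0 (fun m hm => by rw [HahnSeries.coeff_sub, hlmpole m hm, hα m hm, sub_zero]))
  -- y = lp - δ is nonzero of order -n
  have hyc : y.coeff (-(n:ℤ)) = θp - θm := by
    rw [HahnSeries.coeff_sub, hlplead, hδl]
  have hy0 : y ≠ 0 := fun h => by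
    rw [h] at hyc; simp at hyc; exact hθ (sub_eq_zero.mp hyc.symm)
  have hyord : y.order = -(n:ℤ) := le_antisymm
    (HahnSeries.order_le_of_coeff_ne_zero (by rw [hyc]; exact sub_ne_zero.mpr hθ))
    (hs_order_ge hy0 (fun m hm => by rw [HahnSeries.coeff_sub, hlppole m hm, hδ m hm, sub_zero]))
  -- off-diagonal entries of M are power series (order ≥ 1)
  have hβle : ∀ m : ℤ, m ≤ -(n : ℤ) → β.coeff m = 0 := by
    intro m hm
    rcases hm.lt_or_eq with h | h
    · exact hβ m h
    · rw [h]; exact hβl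
  have hγle : ∀ m : ℤ, m ≤ -(n : ℤ) → γ.coeff m = 0 := by
    intro m hm
    rcases hm.lt_or_eq with h | h
    · exact hγ m h
    · rw [h]; exact hγl
  have hβx : ∀ m : ℤ, m < 1 → (β / x).coeff m = 0 := hs_div_coeff β x n hβle hx0 hxord
  have hγy : ∀ m : ℤ, m < 1 → (γ / y).coeff m = 0 := hs_div_coeff γ y n hγle hy0 hyord
  -- determinant
  have hdet : M.det = 1 - (β / x) * (γ / y) := by
    rw [hM]
    show Matrix.det !![(1 : LaurentSeries ℂ), β / x; γ / y, 1] = _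
    rw [Matrix.det_fin_two_of]; ring
  have hdet0 : M.det.coeff 0 = 1 := by
    rw [hdet, HahnSeries.coeff_sub, hs_mul_coeff_zero _ _ hβx hγy]
    simp
  have hdetne : M.det ≠ 0 := fun h => by rw [h] at hdet0; simp at hdet0
  refine ⟨?_, by rw [hdet0]; exact one_ne_zero, ?_⟩
  · -- MatHolo
    intro i j m hm
    have h1 : (1 : LaurentSeries ℂ).coeff m = 0 := by
      rw [HahnSeries.coeff_one, if_neg (by omega)]
    fin_cases i <;> fin_cases j <;> simp [hM]
    · exact h1
    · exact hβx m (by omega)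
    · exact hγy m (by omega)
    · exact h1
  · -- conjugation
    have hdiag : (Matrix.diagonal ![lp, lm] : Matrix (Fin 2) (Fin 2) (LaurentSeries ℂ))
        = Matrix.of !![lp, 0; 0, lm] := by
      ext i j : 1; fin_cases i <;> fin_cases j <;> simp [Matrix.diagonal] <;> rfl
    have key : Matrix.of !![α, β; γ, δ] * M = M * Matrix.diagonal ![lp, lm] := by
      rw [hM, hdiag]
      show (!![α, β; γ, δ] : Matrix (Fin 2) (Fin 2) (LaurentSeries ℂ)) * !![1, β / x; γ / y, 1]
        = !![1, β / x; γ / y, 1] * !![lp, 0; 0, lm]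
      rw [Matrix.mul_fin_two, Matrix.mul_fin_two]
      have e00 : α * 1 + β * (γ / y) = 1 * lp + β / x * 0 := by
        linear_combination (-y⁻¹) * hlp + (lp - α) * mul_inv_cancel₀ hy0 + (-y⁻¹ * (lp - α)) * hydef
      have e01 : α * (β / x) + β * 1 = 1 * 0 + β / x * lm := by
        field_simp
        ring
      have e10 : γ * 1 + δ * (γ / y) = γ / y * lp + 1 * 0 := by
        field_simp
        ring
      have e11 : γ * (β / x) + δ * 1 = γ / y * 0 + 1 * lm := by
        linear_combination (-x⁻¹) * hlm + (lm - δ) * mul_inv_cancel₀ hx0 + (-x⁻¹ * (lm - δ)) * hxdef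
      rw [e00, e01, e10, e11]
    calc M⁻¹ * Matrix.of !![α, β; γ, δ] * M
        = M⁻¹ * (Matrix.of !![α, β; γ, δ] * M) := by rw [Matrix.mul_assoc]
      _ = M⁻¹ * (M * Matrix.diagonal ![lp, lm]) := by rw [key]
      _ = (M⁻¹ * M) * Matrix.diagonal ![lp, lm] := by rw [Matrix.mul_assoc]
      _ = Matrix.diagonal ![lp, lm] := by
          rw [Matrix.nonsing_inv_mul M (isUnit_iff_ne_zero.mpr hdetne), Matrix.one_mul]


end
end
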